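/- For every formal power series φ̂(x) = Σ_{n≥0} φ_n x^n / Γ(1+sn) with coefficients in a Banach space, every integer k ≥ 1 and every real s > 0, the k-fold application of the Γ_s-moment integration operator satisfies the integral formula (∂^{-1}_{Γ_s,x})^k φ̂(x) = - ∫_0^{x^{1/s}} φ̂(y^s) ∂_y [(x^{1/s} - y)^{ks} / Γ(1+ks)] dy, interpreted coefficientwise (i.e., applying the formula to each monomial x^n yields x^{n+k} Γ(1+sn)/Γ(1+s(n+k)) times the original coefficient). -/
import Mathlib

open intervalIntegral MeasureTheory

lemma real_beta {a b X : ℝ} (ha : 0 < a) (hb : 0 < b) (hX : 0 < X) :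
    ∫ y in (0:ℝ)..X, y ^ (a - 1) * (X - y) ^ (b - 1)
      = Real.Gamma a * Real.Gamma b / Real.Gamma (a + b) * X ^ (a + b - 1) := by
  have key : ((∫ y in (0:ℝ)..X, y ^ (a - 1) * (X - y) ^ (b - 1) : ℝ) : ℂ)
      = ∫ y in (0:ℝ)..X, (y : ℂ) ^ ((a : ℂ) - 1) * ((X : ℂ) - y) ^ ((b : ℂ) - 1) := by
    rw [← intervalIntegral.integral_ofReal]
    refine intervalIntegral.integral_congr_ae ?_
    filter_upwards with y hy
    rw [Set.uIoc_of_le hX.le] at hy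
    push_cast
    rw [Complex.ofReal_cpow hy.1.le, Complex.ofReal_cpow (by linarith [hy.2] : (0:ℝ) ≤ X - y)]
    push_cast
    ring
  have hGab : Complex.Gamma ((a : ℂ) + b) ≠ 0 := by
    rw [← Complex.ofReal_add, Complex.Gamma_ofReal]
    exact_mod_cast (Real.Gamma_pos_of_pos (by linarith)).ne'
  have hG := Complex.Gamma_mul_Gamma_eq_betaIntegral (s := (a:ℂ)) (t := (b:ℂ))
    (by simpa using ha) (by simpa using hb)
  have hbeta : Complex.betaIntegral a b
      = Complex.Gamma a * Complex.Gamma b / Complex.Gamma ((a:ℂ) + b) := by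
    rw [eq_div_iff hGab, mul_comm]; exact hG.symm
  have h := Complex.betaIntegral_scaled (a : ℂ) (b : ℂ) hX
  rw [h, hbeta] at key
  have hXc : ((X : ℂ)) ^ ((a:ℂ) + b - 1) = ((X ^ (a + b - 1) : ℝ) : ℂ) := by
    rw [Complex.ofReal_cpow hX.le]; push_cast; ring_nf
  rw [hXc] at key
  have : ((∫ y in (0:ℝ)..X, y ^ (a - 1) * (X - y) ^ (b - 1) : ℝ) : ℂ)
      = ((Real.Gamma a * Real.Gamma b / Real.Gamma (a + b) * X ^ (a + b - 1) : ℝ) : ℂ) := by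
    rw [key]
    push_cast [← Complex.Gamma_ofReal]
    ring
  exact_mod_cast this

/-- The `k`-fold `Γ_s`-moment integration of the monomial `x ^ n` satisfies the
integral formula coefficientwise: applying the integral formula of the paper to the
monomial `x ^ n` yields `Γ(1+sn)/Γ(1+s(n+k)) · x^(n+k)`. -/
theorem moment_integration_formula (s : ℝ) (hs : 0 < s) (k : ℕ) (hk : 1 ≤ k) (n : ℕ)
    (x : ℝ) (hx : 0 < x) :
    -∫ y in (0:ℝ)..(x ^ (1/s)), (y ^ s) ^ n *
        deriv (fun y : ℝ => (x ^ (1/s) - y) ^ ((k : ℝ) * s) / Real.Gamma (1 + k * s)) y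
      = Real.Gamma (1 + s * n) / Real.Gamma (1 + s * (n + k)) * x ^ (n + k) := by
  set X : ℝ := x ^ (1/s) with hXdef
  have hX : 0 < X := Real.rpow_pos_of_pos hx _
  set c : ℝ := (k : ℝ) * s with hcdef
  have hc : 0 < c := mul_pos (by exact_mod_cast hk) hs
  set G : ℝ := Real.Gamma (1 + k * s) with hGdef
  have hGpos : 0 < G := Real.Gamma_pos_of_pos (by positivity)
  have hstep : (∫ y in (0:ℝ)..X, (y ^ s) ^ n *
        deriv (fun y : ℝ => (X - y) ^ c / G) y)
      = ∫ y in (0:ℝ)..X, -((c / G) * (y ^ (s * n + 1 - 1) * (X - y) ^ (c - 1))) := by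
    refine intervalIntegral.integral_congr_ae ?_
    have hne : ∀ᵐ y : ℝ, y ≠ X := by
      refine (ae_iff.mpr ?_)
      simpa using measure_singleton X
    filter_upwards [hne] with y hyne hy
    rw [Set.uIoc_of_le hX.le] at hy
    have hyX : y < X := lt_of_le_of_ne hy.2 hyne
    have hsub : (0:ℝ) < X - y := by linarith
    have h1 : HasDerivAt (fun y : ℝ => X - y) (-1) y := (hasDerivAt_id y).const_sub X
    have h2 : HasDerivAt (fun y : ℝ => (X - y) ^ c) (c * (X - y) ^ (c - 1) * (-1)) y :=
      (Real.hasDerivAt_rpow_const (p := c) (Or.inl hsub.ne')).comp y h1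
    rw [(h2.div_const G).deriv]
    have hpow : (y ^ s) ^ n = y ^ (s * (n:ℝ)) := by
      rw [Real.rpow_mul hy.1.le, ← Real.rpow_natCast (y ^ s) n]
    rw [hpow]
    have : s * (n:ℝ) + 1 - 1 = s * n := by ring
    rw [this]
    ring
  rw [hstep, intervalIntegral.integral_neg, neg_neg, intervalIntegral.integral_const_mul,
    real_beta (by positivity) hc hX]
  have hGc : G = c * Real.Gamma c := by
    rw [hGdef, hcdef, show (1:ℝ) + k * s = k * s + 1 by ring, Real.Gamma_add_one hc.ne']
  have hgam : s * n + 1 + c = 1 + s * (n + k) := by rw [hcdef]; ring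
  have hXpow : X ^ (s * n + 1 + c - 1) = x ^ (n + k) := by
    rw [hXdef, ← Real.rpow_natCast x (n + k), ← Real.rpow_mul hx.le]
    congr 1
    push_cast
    field_simp
    ring
  rw [hgam] at *
  rw [hXpow]
  have hΓc : Real.Gamma c ≠ 0 := (Real.Gamma_pos_of_pos hc).ne'
  have hΓab : Real.Gamma (1 + s * (n + k)) ≠ 0 :=
    (Real.Gamma_pos_of_pos (by positivity)).ne'
  rw [hGc]
  field_simp
  ring
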